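/- Let Φ be an MNPF with closeness parameter κ for a Markov game with state set S. If π* is an ε-approximate maximizer of Φ in every state, i.e., Φ(s,π*) ≥ sup_{π∈Π} Φ(s,π) − ε for all s ∈ S, then π* is a (κ√(2|S|) + ε)-stationary Nash equilibrium: for every player i and every policy π_i, V_i(μ, π*_i, π*_{-i}) ≥ V_i(μ, π_i, π*_{-i}) − (κ√(2|S|) + ε). -/
import Mathlib


open Finset

/-- If `Φ` is an MNPF with closeness parameter `κ` and `π*` is an
`ε`-approximate maximizer of `Φ(s,·)` in every state `s`, then `π*` is a
`(κ√(2|S|) + ε)`-stationary Nash equilibrium. -/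
theorem mnpf_approx_maximizer_is_approx_NE
    {S I : Type} [Fintype S] [Fintype I] [DecidableEq I]
    {A : I → Type} [∀ i, Fintype (A i)]
    (κ ε : ℝ) (hκ : 0 ≤ κ) (hε : 0 ≤ ε)
    (μ : S → ℝ) (hμ0 : ∀ s, 0 ≤ μ s) (hμ1 : ∑ s, μ s = 1)
    (Vs : I → (∀ i, S → A i → ℝ) → S → ℝ)
    (Vμ : I → (∀ i, S → A i → ℝ) → ℝ)
    (hVμ : ∀ i π, Vμ i π = ∑ s, μ s * Vs i π s)
    (Φ : S → (∀ i, S → A i → ℝ) → ℝ)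
    (hMNPF : ∀ (π : ∀ i, S → A i → ℝ) (i : I) (πi' : S → A i → ℝ) (s : S),
      (∀ j s', (∀ a, 0 ≤ π j s' a) ∧ ∑ a, π j s' a = 1) →
      (∀ s', (∀ a, 0 ≤ πi' s' a) ∧ ∑ a, πi' s' a = 1) →
      |(Φ s (Function.update π i πi') - Φ s π) -
          (Vs i (Function.update π i πi') s - Vs i π s)| ≤
        κ * Real.sqrt (∑ s', ∑ a, (πi' s' a - π i s' a) ^ 2))
    (πstar : ∀ i, S → A i → ℝ)
    (hπstar : ∀ j s, (∀ a, 0 ≤ πstar j s a) ∧ ∑ a, πstar j s a = 1)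
    (hmax : ∀ π : ∀ i, S → A i → ℝ,
      (∀ j s, (∀ a, 0 ≤ π j s a) ∧ ∑ a, π j s a = 1) →
      ∀ s, Φ s πstar ≥ Φ s π - ε) :
    ∀ (i : I) (πi : S → A i → ℝ),
      (∀ s, (∀ a, 0 ≤ πi s a) ∧ ∑ a, πi s a = 1) →
      Vμ i πstar ≥ Vμ i (Function.update πstar i πi) -
        (κ * Real.sqrt (2 * Fintype.card S) + ε) := by
  intro i πi hπi
  set π' := Function.update πstar i πi with hπ'
  have hπ'valid : ∀ j s, (∀ a, 0 ≤ π' j s a) ∧ ∑ a, π' j s a = 1 := by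
    intro j s
    by_cases h : j = i
    · subst h; simp [hπ', Function.update_self]; exact hπi s
    · simp [hπ', Function.update_of_ne h]; exact hπstar j s
  -- bound on the squared distance
  have hdist : ∑ s', ∑ a, (πi s' a - πstar i s' a) ^ 2 ≤ 2 * Fintype.card S := by
    have hs : ∀ s' : S, ∑ a, (πi s' a - πstar i s' a) ^ 2 ≤ 2 := by
      intro s'
      have h1 : ∑ a, (πi s' a - πstar i s' a) ^ 2 ≤
          ∑ a, ((πi s' a) ^ 2 + (πstar i s' a) ^ 2) := by
        apply Finset.sum_le_sum
        intro a _
        nlinarith [(hπi s').1 a, (hπstar i s').1 a]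
      have h2 : ∑ a, (πi s' a) ^ 2 ≤ 1 := by
        have := (hπi s').2
        calc ∑ a, (πi s' a) ^ 2 ≤ ∑ a, πi s' a := by
              apply Finset.sum_le_sum
              intro a _
              nlinarith [(hπi s').1 a, Finset.single_le_sum (f := πi s')
                (fun b _ => (hπi s').1 b) (Finset.mem_univ a), this]
          _ = 1 := this
      have h3 : ∑ a, (πstar i s' a) ^ 2 ≤ 1 := by
        have := (hπstar i s').2
        calc ∑ a, (πstar i s' a) ^ 2 ≤ ∑ a, πstar i s' a := by
              apply Finset.sum_le_sum
              intro a _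
              nlinarith [(hπstar i s').1 a, Finset.single_le_sum (f := πstar i s')
                (fun b _ => (hπstar i s').1 b) (Finset.mem_univ a), this]
          _ = 1 := this
      calc ∑ a, (πi s' a - πstar i s' a) ^ 2
          ≤ ∑ a, ((πi s' a) ^ 2 + (πstar i s' a) ^ 2) := h1
        _ = (∑ a, (πi s' a) ^ 2) + ∑ a, (πstar i s' a) ^ 2 := Finset.sum_add_distrib
        _ ≤ 2 := by linarith
    calc ∑ s', ∑ a, (πi s' a - πstar i s' a) ^ 2
        ≤ ∑ _s' : S, (2 : ℝ) := Finset.sum_le_sum (fun s' _ => hs s')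
      _ = 2 * Fintype.card S := by simp [mul_comm]
  have hsqrt : Real.sqrt (∑ s', ∑ a, (πi s' a - πstar i s' a) ^ 2) ≤
      Real.sqrt (2 * Fintype.card S) := Real.sqrt_le_sqrt hdist
  -- per-state bound
  have hstate : ∀ s : S, Vs i π' s - Vs i πstar s ≤
      κ * Real.sqrt (2 * Fintype.card S) + ε := by
    intro s
    have h1 := hMNPF πstar i πi s hπstar hπi
    have h2 := hmax π' hπ'valid s
    have h3 : Vs i π' s - Vs i πstar s ≤ (Φ s π' - Φ s πstar) +
        κ * Real.sqrt (∑ s', ∑ a, (πi s' a - πstar i s' a) ^ 2) := by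
      have := abs_le.mp h1
      rw [hπ'] at *
      linarith [this.1]
    have h4 : κ * Real.sqrt (∑ s', ∑ a, (πi s' a - πstar i s' a) ^ 2) ≤
        κ * Real.sqrt (2 * Fintype.card S) := mul_le_mul_of_nonneg_left hsqrt hκ
    linarith
  rw [hVμ, hVμ]
  have : ∑ s, μ s * Vs i π' s - ∑ s, μ s * Vs i πstar s ≤
      κ * Real.sqrt (2 * Fintype.card S) + ε := by
    rw [← Finset.sum_sub_distrib]
    calc ∑ s, (μ s * Vs i π' s - μ s * Vs i πstar s)
        = ∑ s, μ s * (Vs i π' s - Vs i πstar s) := by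
          apply Finset.sum_congr rfl; intro s _; ring
      _ ≤ ∑ s, μ s * (κ * Real.sqrt (2 * Fintype.card S) + ε) := by
          apply Finset.sum_le_sum
          intro s _
          exact mul_le_mul_of_nonneg_left (hstate s) (hμ0 s)
      _ = (κ * Real.sqrt (2 * Fintype.card S) + ε) := by
          rw [← Finset.sum_mul, hμ1, one_mul]
  linarith
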